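/- Let d_A, d_B be positive integers, let ρ be a density matrix on ℂ^{d_A} ⊗ ℂ^{d_B}, and let A₀, A₁ be Hermitian d_A×d_A complex matrices and B₀, B₁ Hermitian d_B×d_B complex matrices, each of operator norm at most 1. Then |Tr[ρ(A₀⊗B₀ + A₀⊗B₁ + A₁⊗B₀ − A₁⊗B₁)]| ≤ 2√2. -/

import Mathlib

open Matrix
open scoped Kronecker Matrix.Norms.L2Operator ComplexOrder
set_option linter.unusedSectionVars false

variable {m n : Type*} [Fintype m] [Fintype n] [DecidableEq m] [DecidableEq n]

lemma sub_kron (A B : Matrix m m ℂ) (C : Matrix n n ℂ) : (A - B) ⊗ₖ C = A ⊗ₖ C - B ⊗ₖ C := by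
  ext ⟨i,k⟩ ⟨j,l⟩; simp [kroneckerMap_apply, sub_mul]

lemma kron_sub (A : Matrix m m ℂ) (B C : Matrix n n ℂ) : A ⊗ₖ (B - C) = A ⊗ₖ B - A ⊗ₖ C := by
  ext ⟨i,k⟩ ⟨j,l⟩; simp [kroneckerMap_apply, mul_sub]

lemma kron_conjTranspose (A : Matrix m m ℂ) (B : Matrix n n ℂ) : (A ⊗ₖ B)ᴴ = Aᴴ ⊗ₖ Bᴴ := by
  ext ⟨i,k⟩ ⟨j,l⟩; simp [kroneckerMap_apply, conjTranspose_apply, mul_comm]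

open scoped MatrixOrder in
lemma psd_eq_conjTranspose_mul_self {M : Matrix m m ℂ} (hM : M.PosSemidef) :
    ∃ B : Matrix m m ℂ, M = Bᴴ * B :=
  CStarAlgebra.nonneg_iff_eq_star_mul_self.mp hM.nonneg

lemma psd_trace_nonneg {M : Matrix m m ℂ} (hM : M.PosSemidef) : 0 ≤ M.trace := by
  rw [Matrix.trace]
  refine Finset.sum_nonneg fun i _ => ?_
  have := hM.dotProduct_mulVec_nonneg (Pi.single i 1)
  simpa [dotProduct, Matrix.mulVec, Pi.single_apply, Finset.sum_ite_eq, diag] using this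

lemma psd_trace_mul_nonneg {ρ S : Matrix m m ℂ} (hρ : ρ.PosSemidef) (hS : S.PosSemidef) :
    0 ≤ (ρ * S).trace := by
  obtain ⟨B, rfl⟩ := psd_eq_conjTranspose_mul_self hρ
  rw [← Matrix.trace_mul_cycle]
  exact psd_trace_nonneg (hS.mul_mul_conjTranspose_same B)

lemma psd_kron_one {M : Matrix m m ℂ} (hM : M.PosSemidef) :
    (M ⊗ₖ (1 : Matrix n n ℂ)).PosSemidef := by
  obtain ⟨B, rfl⟩ := psd_eq_conjTranspose_mul_self hM
  have : (Bᴴ * B) ⊗ₖ (1 : Matrix n n ℂ) = (B ⊗ₖ 1)ᴴ * (B ⊗ₖ 1) := by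
    rw [kron_conjTranspose, ← Matrix.mul_kronecker_mul, conjTranspose_one, Matrix.one_mul]
  rw [this]
  exact Matrix.posSemidef_conjTranspose_mul_self _

lemma psd_one_kron {M : Matrix n n ℂ} (hM : M.PosSemidef) :
    ((1 : Matrix m m ℂ) ⊗ₖ M).PosSemidef := by
  obtain ⟨B, rfl⟩ := psd_eq_conjTranspose_mul_self hM
  have : (1 : Matrix m m ℂ) ⊗ₖ (Bᴴ * B) = ((1 : Matrix m m ℂ) ⊗ₖ B)ᴴ * (1 ⊗ₖ B) := by
    rw [kron_conjTranspose, ← Matrix.mul_kronecker_mul, conjTranspose_one, Matrix.one_mul]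
  rw [this]
  exact Matrix.posSemidef_conjTranspose_mul_self _

lemma one_sub_sq_psd {A : Matrix m m ℂ} (hn : ‖A‖ ≤ 1) : (1 - Aᴴ * A).PosSemidef := by
  refine Matrix.PosSemidef.of_dotProduct_mulVec_nonneg ?_ ?_
  · simp [Matrix.IsHermitian, conjTranspose_sub, conjTranspose_mul]
  · intro x
    have h1 : star x ⬝ᵥ (1 - Aᴴ * A) *ᵥ x = star x ⬝ᵥ x - star (A *ᵥ x) ⬝ᵥ (A *ᵥ x) := by
      rw [Matrix.sub_mulVec, dotProduct_sub, Matrix.one_mulVec, ← Matrix.mulVec_mulVec,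
        Matrix.dotProduct_mulVec, Matrix.star_mulVec, ← Matrix.conjTranspose_conjTranspose A]
    rw [h1]
    have e2 : ∀ y : m → ℂ, star y ⬝ᵥ y = ((‖(WithLp.equiv 2 (m → ℂ)).symm y‖ : ℝ) : ℂ) ^ 2 := by
      intro y
      have h := EuclideanSpace.inner_eq_star_dotProduct ((WithLp.equiv 2 (m → ℂ)).symm y)
        ((WithLp.equiv 2 (m → ℂ)).symm y)
      simp only [WithLp.equiv_symm_apply, WithLp.ofLp_toLp] at h
      rw [dotProduct_comm] at h
      rw [← h]
      exact inner_self_eq_norm_sq_to_K _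
    rw [e2, e2]
    have hAx : ‖(WithLp.equiv 2 (m → ℂ)).symm (A *ᵥ x)‖ ≤ ‖(WithLp.equiv 2 (m → ℂ)).symm x‖ := by
      calc ‖(WithLp.equiv 2 (m → ℂ)).symm (A *ᵥ x)‖
          ≤ ‖A‖ * ‖(WithLp.equiv 2 (m → ℂ)).symm x‖ := A.l2_opNorm_mulVec _
        _ ≤ 1 * ‖(WithLp.equiv 2 (m → ℂ)).symm x‖ := by
            exact mul_le_mul_of_nonneg_right hn (norm_nonneg _)
        _ = _ := one_mul _
    have : (0:ℝ) ≤ ‖(WithLp.equiv 2 (m → ℂ)).symm x‖ ^ 2 - ‖(WithLp.equiv 2 (m → ℂ)).symm (A *ᵥ x)‖ ^ 2 := by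
      nlinarith [norm_nonneg ((WithLp.equiv 2 (m → ℂ)).symm (A *ᵥ x))]
    calc (0:ℂ) = ((0:ℝ):ℂ) := by norm_num
      _ ≤ _ := by
          rw [← Complex.ofReal_pow, ← Complex.ofReal_pow, ← Complex.ofReal_sub]
          exact_mod_cast Complex.real_le_real.mpr (by linarith)

lemma sos_key (A₀ A₁ : Matrix m m ℂ) (B₀ B₁ : Matrix n n ℂ) (c : ℂ) (hc : c * c = 2) :
    ((A₀+A₁) ⊗ₖ (1:Matrix n n ℂ) - c • ((1:Matrix m m ℂ) ⊗ₖ B₀)) *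
      ((A₀+A₁) ⊗ₖ (1:Matrix n n ℂ) - c • ((1:Matrix m m ℂ) ⊗ₖ B₀))
    + ((A₀-A₁) ⊗ₖ (1:Matrix n n ℂ) - c • ((1:Matrix m m ℂ) ⊗ₖ B₁)) *
      ((A₀-A₁) ⊗ₖ (1:Matrix n n ℂ) - c • ((1:Matrix m m ℂ) ⊗ₖ B₁))
    + (2:ℂ) • ((1 - A₀*A₀) ⊗ₖ (1:Matrix n n ℂ))
    + (2:ℂ) • ((1 - A₁*A₁) ⊗ₖ (1:Matrix n n ℂ))
    + (2:ℂ) • ((1:Matrix m m ℂ) ⊗ₖ (1 - B₀*B₀))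
    + (2:ℂ) • ((1:Matrix m m ℂ) ⊗ₖ (1 - B₁*B₁))
    = (8:ℂ) • ((1:Matrix m m ℂ) ⊗ₖ (1:Matrix n n ℂ))
      - (2*c) • (A₀⊗ₖB₀ + A₀⊗ₖB₁ + A₁⊗ₖB₀ - A₁⊗ₖB₁) := by
  simp only [Matrix.sub_mul, Matrix.mul_sub, Matrix.add_mul, Matrix.mul_add, smul_mul_assoc,
    mul_smul_comm, ← Matrix.mul_kronecker_mul, Matrix.one_mul, Matrix.mul_one,
    sub_kron, kron_sub, add_kronecker, kronecker_add, smul_smul, hc, smul_sub, smul_add]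
  module

lemma neg_kron (A : Matrix m m ℂ) (B : Matrix n n ℂ) : (-A) ⊗ₖ B = -(A ⊗ₖ B) := by
  ext ⟨i,k⟩ ⟨j,l⟩; simp [kroneckerMap_apply]

lemma kron_neg (A : Matrix m m ℂ) (B : Matrix n n ℂ) : A ⊗ₖ (-B) = -(A ⊗ₖ B) := by
  ext ⟨i,k⟩ ⟨j,l⟩; simp [kroneckerMap_apply]

theorem tsirelson_bound (dA dB : ℕ) (hdA : 0 < dA) (hdB : 0 < dB)
    (ρ : Matrix (Fin dA × Fin dB) (Fin dA × Fin dB) ℂ)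
    (hρ : ρ.PosSemidef) (hρtr : ρ.trace = 1)
    (A₀ A₁ : Matrix (Fin dA) (Fin dA) ℂ)
    (B₀ B₁ : Matrix (Fin dB) (Fin dB) ℂ)
    (hA₀ : A₀.IsHermitian) (hA₁ : A₁.IsHermitian)
    (hB₀ : B₀.IsHermitian) (hB₁ : B₁.IsHermitian)
    (hA₀n : ‖A₀‖ ≤ 1) (hA₁n : ‖A₁‖ ≤ 1)
    (hB₀n : ‖B₀‖ ≤ 1) (hB₁n : ‖B₁‖ ≤ 1) :
    ‖(ρ * (A₀ ⊗ₖ B₀ + A₀ ⊗ₖ B₁ + A₁ ⊗ₖ B₀ - A₁ ⊗ₖ B₁)).trace‖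
      ≤ 2 * Real.sqrt 2 := by
  have hs : Real.sqrt 2 * Real.sqrt 2 = 2 := Real.mul_self_sqrt (by norm_num)
  have hs0 : (0:ℝ) < Real.sqrt 2 := Real.sqrt_pos.mpr (by norm_num)
  set c : ℂ := ((Real.sqrt 2 : ℝ) : ℂ) with hcdef
  have hc : c * c = 2 := by
    rw [hcdef, ← Complex.ofReal_mul, hs]; norm_num
  have hstarc : star c = c := by rw [hcdef]; exact Complex.conj_ofReal _
  set C := A₀ ⊗ₖ B₀ + A₀ ⊗ₖ B₁ + A₁ ⊗ₖ B₀ - A₁ ⊗ₖ B₁ with hC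
  have hA0sq : (1 - A₀ * A₀).PosSemidef := by
    have := one_sub_sq_psd hA₀n; rwa [hA₀.eq] at this
  have hA1sq : (1 - A₁ * A₁).PosSemidef := by
    have := one_sub_sq_psd hA₁n; rwa [hA₁.eq] at this
  have hB0sq : (1 - B₀ * B₀).PosSemidef := by
    have := one_sub_sq_psd hB₀n; rwa [hB₀.eq] at this
  have hB1sq : (1 - B₁ * B₁).PosSemidef := by
    have := one_sub_sq_psd hB₁n; rwa [hB₁.eq] at this
  have main : ∀ (B₀' B₁' : Matrix (Fin dB) (Fin dB) ℂ), B₀'.IsHermitian → B₁'.IsHermitian →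
      (1 - B₀' * B₀').PosSemidef → (1 - B₁' * B₁').PosSemidef →
      0 ≤ (ρ * ((8:ℂ) • (1 : Matrix (Fin dA × Fin dB) (Fin dA × Fin dB) ℂ)
        - (2*c) • (A₀⊗ₖB₀' + A₀⊗ₖB₁' + A₁⊗ₖB₀' - A₁⊗ₖB₁'))).trace := by
    intro B₀' B₁' hB₀' hB₁' h0 h1
    set P := (A₀+A₁) ⊗ₖ (1:Matrix (Fin dB) (Fin dB) ℂ)
      - c • ((1:Matrix (Fin dA) (Fin dA) ℂ) ⊗ₖ B₀') with hPdef
    set Q := (A₀-A₁) ⊗ₖ (1:Matrix (Fin dB) (Fin dB) ℂ)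
      - c • ((1:Matrix (Fin dA) (Fin dA) ℂ) ⊗ₖ B₁') with hQdef
    have hP : Pᴴ = P := by
      rw [hPdef]
      simp [conjTranspose_sub, conjTranspose_add, conjTranspose_smul, kron_conjTranspose,
        conjTranspose_one, hA₀.eq, hA₁.eq, hB₀'.eq, hstarc]
    have hQ : Qᴴ = Q := by
      rw [hQdef]
      simp [conjTranspose_sub, conjTranspose_add, conjTranspose_smul, kron_conjTranspose,
        conjTranspose_one, hA₀.eq, hA₁.eq, hB₁'.eq, hstarc]
    have hPP : (P * P).PosSemidef := by
      have := Matrix.posSemidef_conjTranspose_mul_self P; rwa [hP] at this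
    have hQQ : (Q * Q).PosSemidef := by
      have := Matrix.posSemidef_conjTranspose_mul_self Q; rwa [hQ] at this
    have hS : (P * P + Q * Q
        + (2:ℂ) • ((1 - A₀*A₀) ⊗ₖ (1:Matrix (Fin dB) (Fin dB) ℂ))
        + (2:ℂ) • ((1 - A₁*A₁) ⊗ₖ (1:Matrix (Fin dB) (Fin dB) ℂ))
        + (2:ℂ) • ((1:Matrix (Fin dA) (Fin dA) ℂ) ⊗ₖ (1 - B₀'*B₀'))
        + (2:ℂ) • ((1:Matrix (Fin dA) (Fin dA) ℂ) ⊗ₖ (1 - B₁'*B₁'))).PosSemidef := by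
      rw [two_smul ℂ, two_smul ℂ, two_smul ℂ, two_smul ℂ]
      exact (((((hPP.add hQQ).add
        ((psd_kron_one hA0sq).add (psd_kron_one hA0sq))).add
        ((psd_kron_one hA1sq).add (psd_kron_one hA1sq))).add
        ((psd_one_kron h0).add (psd_one_kron h0))).add
        ((psd_one_kron h1).add (psd_one_kron h1)))
    have key := sos_key A₀ A₁ B₀' B₁' c hc
    rw [← hPdef, ← hQdef, Matrix.one_kronecker_one] at key
    rw [← key]
    exact psd_trace_mul_nonneg hρ hS
  have h₁ := main B₀ B₁ hB₀ hB₁ hB0sq hB1sq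
  have h₂ := main (-B₀) (-B₁) hB₀.neg hB₁.neg
    (by simpa using hB0sq) (by simpa using hB1sq)
  rw [← hC] at h₁
  have hnegC : A₀⊗ₖ(-B₀) + A₀⊗ₖ(-B₁) + A₁⊗ₖ(-B₀) - A₁⊗ₖ(-B₁) = -C := by
    rw [hC]; simp only [kron_neg]; abel
  rw [hnegC, smul_neg, sub_neg_eq_add] at h₂
  set T := (ρ * C).trace with hT
  have expand : ∀ M : Matrix (Fin dA × Fin dB) (Fin dA × Fin dB) ℂ,
      (ρ * ((8:ℂ) • 1 + (2*c) • M)).trace = 8 + (2*c) * (ρ*M).trace := by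
    intro M
    rw [Matrix.mul_add, Matrix.trace_add, mul_smul_comm, mul_smul_comm, Matrix.mul_one,
      Matrix.trace_smul, Matrix.trace_smul, hρtr, smul_eq_mul, smul_eq_mul, mul_one]
  have e₁ : (ρ * ((8:ℂ) • 1 - (2*c) • C)).trace = 8 - (2*c) * T := by
    have := expand (-C)
    rw [smul_neg, ← sub_eq_add_neg] at this
    rw [this, Matrix.mul_neg, Matrix.trace_neg, ← hT]; ring
  have e₂ : (ρ * ((8:ℂ) • 1 + (2*c) • C)).trace = 8 + (2*c) * T := by
    rw [expand C, ← hT]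
  rw [e₁] at h₁
  rw [e₂] at h₂
  -- T is real
  have hCH : Cᴴ = C := by
    rw [hC]
    simp [conjTranspose_sub, conjTranspose_add, kron_conjTranspose,
      hA₀.eq, hA₁.eq, hB₀.eq, hB₁.eq]
  have hTreal : (starRingEnd ℂ) T = T := by
    have h1 : (starRingEnd ℂ) T = ((ρ*C)ᴴ).trace := by
      rw [Matrix.trace_conjTranspose, hT]; rfl
    rw [h1, Matrix.conjTranspose_mul, hCH, hρ.isHermitian.eq, Matrix.trace_mul_comm, ← hT]
  have hTim : T.im = 0 := Complex.conj_eq_iff_im.mp hTreal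
  have r₁ : 2 * Real.sqrt 2 * T.re ≤ 8 := by
    have := (Complex.le_def.mp h₁).1
    simp [Complex.sub_re, Complex.mul_re, Complex.mul_im, hcdef, hTim] at this
    linarith
  have r₂ : -(8:ℝ) ≤ 2 * Real.sqrt 2 * T.re := by
    have := (Complex.le_def.mp h₂).1
    simp [Complex.add_re, Complex.mul_re, Complex.mul_im, hcdef, hTim] at this
    linarith
  have hTform : T = ((T.re : ℝ) : ℂ) := by
    apply Complex.ext <;> simp [hTim]
  rw [hTform, Complex.norm_real, Real.norm_eq_abs, abs_le]
  constructor
  · nlinarith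
  · nlinarith
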